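/- Let Ŵ2, E2, Ŵ3, E3 be mutually independent real random variables, exponentially distributed with means σ̂2², σ_{e2}², σ̂3², σ_{e3}² > 0 respectively. Let P1, P2, P3, N0, γ̄2 > 0 with λ_P := P2/P1 > γ̄2, and set ρ12 = P1·σ̂2²/N0, ρ3 = P3·σ̂3²/N0. Define X = Ŵ2·P2/(Ŵ2·P1 + E2·(P1+P2) + N0) and Y = Ŵ3·P3/(E3·P3 + N0). Then P{ X + Y < γ̄2 } = 1 − (1 + (σ_{e3}²/σ̂3²)·γ̄2)^{−1}·exp(−γ̄2/ρ3) − ∫₀^{γ̄2} [ (1/ρ3)·(1 + (σ_{e3}²/σ̂3²)·y)^{−1} + (σ_{e3}²/σ̂3²)·(1 + (σ_{e3}²/σ̂3²)·y)^{−2} ] · (1 + ((γ̄2 − y)·(1+λ_P)/(λ_P − γ̄2 + y))·σ_{e2}²/σ̂2²)^{−1} · exp( −((γ̄2 − y)/(λ_P − γ̄2 + y))·(1/ρ12) − y/ρ3 ) dy. -/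

import Mathlib

open MeasureTheory ProbabilityTheory

/-- The law of an exponentially distributed random variable with mean `a`:
density `(1/a)·exp(−x/a)` with respect to Lebesgue measure on `[0, ∞)`. -/
noncomputable def expMean (a : ℝ) : Measure ℝ :=
  volume.withDensity fun x => ENNReal.ofReal (if 0 ≤ x then (1 / a) * Real.exp (-x / a) else 0)


open Real Set Filter


lemma expMean_eq_expMeasure {a : ℝ} : expMean a = expMeasure (1/a) := by
  rw [expMean, expMeasure, gammaMeasure]
  congr 1
  funext x
  rw [gammaPDF]
  show _ = ENNReal.ofReal (exponentialPDFReal (1/a) x)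
  rw [← exponentialPDF, exponentialPDF_eq]
  congr 1
  split_ifs with h
  · ring_nf
  · rfl

lemma expMean_prob {a : ℝ} (ha : 0 < a) : IsProbabilityMeasure (expMean a) := by
  rw [expMean_eq_expMeasure]
  exact isProbabilityMeasure_gammaMeasure zero_lt_one (by positivity)

lemma expMean_Iic {a : ℝ} (ha : 0 < a) (m : ℝ) :
    expMean a (Iic m) = ENNReal.ofReal (if 0 ≤ m then 1 - Real.exp (-m/a) else 0) := by
  rw [expMean_eq_expMeasure, expMeasure, gammaMeasure,
    withDensity_apply _ measurableSet_Iic]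
  have : ∀ x, gammaPDF 1 (1/a) x = exponentialPDF (1/a) x := fun x => rfl
  simp_rw [this]
  rw [lintegral_exponentialPDF_eq_antiDeriv (by positivity) m]
  congr 1
  split_ifs with h
  · ring_nf
  · rfl

lemma expMean_Iio {a : ℝ} (ha : 0 < a) (m : ℝ) :
    expMean a (Iio m) = ENNReal.ofReal (if 0 ≤ m then 1 - Real.exp (-m/a) else 0) := by
  rw [← expMean_Iic ha m]
  refine measure_congr ?_
  have h1 : (Iio m : Set ℝ) =ᵐ[volume] Iic m := Iio_ae_eq_Iic
  exact (withDensity_absolutelyContinuous volume _).ae_eq h1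

lemma expMean_nonneg_ae {a : ℝ} : ∀ᵐ x ∂(expMean a), 0 ≤ x := by
  rw [ae_iff]
  have h : {x : ℝ | ¬ 0 ≤ x} = Iio 0 := by ext x; simp
  rw [h, expMean, withDensity_apply _ measurableSet_Iio]
  rw [setLIntegral_congr_fun measurableSet_Iio
    (fun x (hx : x < 0) => by rw [if_neg (not_le.2 hx), ENNReal.ofReal_zero])]
  simp



lemma integral_exp_neg_mul_Ioi {b : ℝ} (hb : 0 < b) :
    ∫ x in Ioi (0:ℝ), Real.exp (-(b * x)) = 1 / b := by
  have := integral_comp_mul_left_Ioi (fun x => Real.exp (-x)) 0 hb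
  simp only [mul_zero] at this
  rw [show (fun x => Real.exp (-(b*x))) = (fun x => Real.exp (-(b*x))) from rfl]
  calc ∫ x in Ioi (0:ℝ), Real.exp (-(b * x))
      = b⁻¹ • ∫ x in Ioi (0:ℝ), Real.exp (-x) := this
    _ = 1 / b := by rw [integral_exp_neg_Ioi_zero, smul_eq_mul, mul_one, one_div]

lemma integrable_exp_neg_mul_Ioi {b : ℝ} (hb : 0 < b) :
    IntegrableOn (fun x => Real.exp (-(b * x))) (Ioi (0:ℝ)) := by
  simpa [neg_mul] using exp_neg_integrableOn_Ioi 0 hb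

lemma key_int {σ α β : ℝ} (hσ : 0 < σ) (hα : 0 ≤ α) (hβ : 0 ≤ β) :
    ∫⁻ e in Ioi (0:ℝ),
      ENNReal.ofReal ((1/σ) * Real.exp (-e/σ) * (1 - Real.exp (-(α*e+β)))) =
      ENNReal.ofReal (1 - Real.exp (-β) * (1 + α*σ)⁻¹) := by
  have hfun : ∀ e : ℝ, (1/σ) * Real.exp (-e/σ) * (1 - Real.exp (-(α*e+β)))
      = (1/σ) * Real.exp (-((1/σ)*e)) - ((1/σ) * Real.exp (-β)) * Real.exp (-((1/σ+α)*e)) := by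
    intro e
    rw [mul_sub, mul_one]
    congr 1
    · congr 1; ring
    · rw [mul_assoc, mul_assoc, ← Real.exp_add, ← Real.exp_add]
      congr 1; ring
  have h1 : IntegrableOn (fun e => (1/σ) * Real.exp (-((1/σ)*e))) (Ioi (0:ℝ)) :=
    (integrable_exp_neg_mul_Ioi (by positivity)).const_mul _
  have h2 : IntegrableOn (fun e => ((1/σ) * Real.exp (-β)) * Real.exp (-((1/σ+α)*e)))
      (Ioi (0:ℝ)) := (integrable_exp_neg_mul_Ioi (by positivity)).const_mul _
  have hint : IntegrableOn
      (fun e => (1/σ) * Real.exp (-e/σ) * (1 - Real.exp (-(α*e+β)))) (Ioi (0:ℝ)) := by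
    refine MeasureTheory.IntegrableOn.congr_fun (h1.sub h2) (fun e _ => ?_) measurableSet_Ioi
    simp only [Pi.sub_apply]
    exact (hfun e).symm
  have hnn : 0 ≤ᵐ[volume.restrict (Ioi (0:ℝ))]
      (fun e => (1/σ) * Real.exp (-e/σ) * (1 - Real.exp (-(α*e+β)))) := by
    refine ae_restrict_of_forall_mem measurableSet_Ioi (fun e he => ?_)
    have he' : (0:ℝ) < e := he
    have : Real.exp (-(α*e+β)) ≤ 1 := by
      rw [Real.exp_le_one_iff]
      nlinarith
    have h3 : (0:ℝ) ≤ 1 - Real.exp (-(α*e+β)) := by linarith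
    positivity
  rw [← ofReal_integral_eq_lintegral_ofReal hint hnn]
  congr 1
  rw [setIntegral_congr_fun measurableSet_Ioi (fun e _ => hfun e), integral_sub h1 h2,
    integral_const_mul, integral_const_mul, integral_exp_neg_mul_Ioi (by positivity : (0:ℝ) < 1/σ),
    integral_exp_neg_mul_Ioi (by positivity : (0:ℝ) < 1/σ + α)]
  rw [div_div_eq_mul_div, one_mul]
  have hσ' : σ ≠ 0 := ne_of_gt hσ
  have : (0:ℝ) < 1 + α * σ := by positivity
  field_simp

lemma expMean_Iio_zero {a : ℝ} : expMean a (Iio 0) = 0 := by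
  rw [expMean, withDensity_apply _ measurableSet_Iio]
  rw [setLIntegral_congr_fun measurableSet_Iio
    (fun x (hx : x < 0) => by rw [if_neg (not_le.2 hx), ENNReal.ofReal_zero])]
  simp

lemma expMean_inter_Ici {a : ℝ} {S : Set ℝ} (hS : MeasurableSet S) :
    expMean a S = expMean a (S ∩ Ici 0) := by
  have h1 : expMean a (S ∩ Ici 0) + expMean a (S \ Ici 0) = expMean a S :=
    measure_inter_add_diff S measurableSet_Ici
  have h2 : expMean a (S \ Ici 0) = 0 := by
    refine measure_mono_null (fun x hx => ?_) (expMean_Iio_zero (a := a))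
    exact not_le.1 (by simpa using hx.2)
  rw [← h1, h2, add_zero]

lemma expMean_Ico {a : ℝ} (ha : 0 < a) {m : ℝ} (hm : 0 ≤ m) :
    expMean a (Ico 0 m) = ENNReal.ofReal (1 - Real.exp (-m/a)) := by
  have hu : Iio (0:ℝ) ∪ Ico 0 m = Iio m := Iio_union_Ico_eq_Iio hm
  have hd : Disjoint (Iio (0:ℝ)) (Ico 0 m) := by
    refine Set.disjoint_left.2 (fun x hx hx' => ?_)
    exact absurd hx'.1 (not_le.2 hx)

  have := measure_union (μ := expMean a) hd measurableSet_Ico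
  rw [hu] at this
  rw [expMean_Iio ha, if_pos hm, expMean_Iio_zero, zero_add] at this
  exact this.symm

lemma prod_quadrant_null {a b : ℝ} (ha : 0 < a) (hb : 0 < b) :
    ((expMean a).prod (expMean b)) ((Ici (0:ℝ) ×ˢ Ici (0:ℝ))ᶜ : Set (ℝ×ℝ)) = 0 := by
  haveI := expMean_prob ha
  haveI := expMean_prob hb
  rw [Set.compl_prod_eq_union]
  refine le_antisymm (le_trans (measure_union_le _ _) ?_) (by simp)
  rw [Measure.prod_prod, Measure.prod_prod, compl_Ici,
    expMean_Iio_zero, expMean_Iio_zero, zero_mul, mul_zero, add_zero]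

lemma prod_cdf {σe σw α β : ℝ} (hσe : 0 < σe) (hσw : 0 < σw) (hα : 0 ≤ α) (hβ : 0 ≤ β)
    {S : Set (ℝ×ℝ)} (hS : MeasurableSet S)
    (hsec : ∀ e, 0 ≤ e → {w : ℝ | (e,w) ∈ S} ∩ Ici 0 = Ico 0 (σw*(α*e+β))) :
    ((expMean σe).prod (expMean σw)) S
      = ENNReal.ofReal (1 - Real.exp (-β) * (1+α*σe)⁻¹) := by
  haveI := expMean_prob hσe
  haveI := expMean_prob hσw
  rw [Measure.prod_apply hS]
  have hinner : ∀ᵐ e ∂(expMean σe),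
      expMean σw (Prod.mk e ⁻¹' S) = ENNReal.ofReal (1 - Real.exp (-(α*e+β))) := by
    filter_upwards [expMean_nonneg_ae (a := σe)] with e he
    have hm : 0 ≤ σw*(α*e+β) := by positivity
    rw [expMean_inter_Ici (measurable_prodMk_left hS)]
    have hsec' : (Prod.mk e ⁻¹' S) ∩ Ici 0 = Ico 0 (σw*(α*e+β)) := hsec e he
    rw [hsec', expMean_Ico hσw hm, neg_div, mul_div_cancel_left₀ _ (ne_of_gt hσw)]
  rw [lintegral_congr_ae hinner]
  have hdens : Measurable fun x : ℝ =>
      ENNReal.ofReal (if 0 ≤ x then (1 / σe) * Real.exp (-x / σe) else 0) := by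
    refine ENNReal.measurable_ofReal.comp ?_
    exact Measurable.ite measurableSet_Ici ((measurable_id.neg.div_const σe).exp.const_mul _)
      measurable_const
  have hg : Measurable fun e : ℝ => ENNReal.ofReal (1 - Real.exp (-(α*e+β))) := by
    refine ENNReal.measurable_ofReal.comp ?_
    exact (measurable_const.sub (((measurable_id.const_mul α).add_const β).neg.exp))
  rw [show expMean σe = volume.withDensity fun x =>
      ENNReal.ofReal (if 0 ≤ x then (1 / σe) * Real.exp (-x / σe) else 0) from rfl,
    lintegral_withDensity_eq_lintegral_mul _ hdens hg]
  simp only [Pi.mul_apply]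
  rw [← lintegral_add_compl (μ := volume)
      (f := fun e => (ENNReal.ofReal (if 0 ≤ e then (1 / σe) * Real.exp (-e / σe) else 0)) *
        ENNReal.ofReal (1 - Real.exp (-(α*e+β)))) measurableSet_Ioi]
  have hcompl : ∫⁻ e in (Ioi (0:ℝ))ᶜ,
      (ENNReal.ofReal (if 0 ≤ e then (1 / σe) * Real.exp (-e / σe) else 0)) *
        ENNReal.ofReal (1 - Real.exp (-(α*e+β))) ∂volume = 0 := by
    rw [compl_Ioi, ← Measure.restrict_congr_set (Iio_ae_eq_Iic (a := (0:ℝ)))]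
    rw [setLIntegral_congr_fun measurableSet_Iio (fun x (hx : x < 0) => by
      rw [if_neg (not_le.2 hx), ENNReal.ofReal_zero, zero_mul])]
    simp
  rw [hcompl, add_zero]
  rw [setLIntegral_congr_fun measurableSet_Ioi (fun e (he : 0 < e) => by
    rw [if_pos he.le, ← ENNReal.ofReal_mul (by positivity)])]
  exact key_int hσe hα hβ

lemma measurable_phi {P1 P2 N0 : ℝ} :
    Measurable (fun p : ℝ×ℝ => p.2*P2/(p.2*P1 + p.1*(P1+P2) + N0)) :=
  (measurable_snd.mul_const P2).div
    (((measurable_snd.mul_const P1).add (measurable_fst.mul_const (P1+P2))).add_const N0)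

lemma measurable_psi {P3 N0 : ℝ} :
    Measurable (fun p : ℝ×ℝ => p.2*P3/(p.1*P3 + N0)) :=
  (measurable_snd.mul_const P3).div ((measurable_fst.mul_const P3).add_const N0)

lemma cdf_zero {a b : ℝ} (ha : 0 < a) (hb : 0 < b) {f : ℝ×ℝ → ℝ} (hf : Measurable f)
    (h0 : ∀ p : ℝ×ℝ, 0 ≤ p.1 → 0 ≤ p.2 → 0 ≤ f p) {t : ℝ} (ht : t ≤ 0) :
    (((expMean a).prod (expMean b)).map f) (Iio t) = 0 := by
  haveI := expMean_prob ha
  haveI := expMean_prob hb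
  rw [Measure.map_apply hf measurableSet_Iio]
  refine measure_mono_null (fun p hp => ?_) (prod_quadrant_null ha hb)
  intro hq
  have h1 : 0 ≤ f p := h0 p hq.1 hq.2
  have h2 : f p < t := hp
  linarith

lemma cdf_X {σe σw P1 P2 N0 t : ℝ} (hσe : 0 < σe) (hσw : 0 < σw) (hP1 : 0 < P1)
    (hP2 : 0 < P2) (hN0 : 0 < N0) (ht : 0 < t) (ht2 : t*P1 < P2) :
    (((expMean σe).prod (expMean σw)).map
        (fun p : ℝ×ℝ => p.2*P2/(p.2*P1 + p.1*(P1+P2) + N0))) (Iio t)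
      = ENNReal.ofReal (1 - Real.exp (-(t*N0/((P2 - t*P1)*σw)))
          * (1 + (t*(P1+P2)/((P2-t*P1)*σw))*σe)⁻¹) := by
  haveI := expMean_prob hσe
  haveI := expMean_prob hσw
  have hden : (0:ℝ) < P2 - t*P1 := by linarith
  rw [Measure.map_apply measurable_phi measurableSet_Iio]
  refine prod_cdf hσe hσw (by positivity) (by positivity)
    (measurable_phi measurableSet_Iio) (fun e he => ?_)
  have hm : σw * ((t*(P1+P2)/((P2-t*P1)*σw))*e + t*N0/((P2 - t*P1)*σw))
      = t*(e*(P1+P2)+N0)/(P2-t*P1) := by field_simp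
  rw [hm]
  ext w
  simp only [mem_inter_iff, mem_setOf_eq, mem_Ici, mem_Ico, mem_preimage, mem_Iio]
  constructor
  · rintro ⟨hlt, hw⟩
    refine ⟨hw, ?_⟩
    have hdpos : 0 < w*P1 + e*(P1+P2) + N0 := by positivity
    rw [div_lt_iff₀ hdpos] at hlt
    rw [lt_div_iff₀ hden]
    nlinarith
  · rintro ⟨hw, hlt⟩
    refine ⟨?_, hw⟩
    have hdpos : 0 < w*P1 + e*(P1+P2) + N0 := by positivity
    rw [lt_div_iff₀ hden] at hlt
    rw [div_lt_iff₀ hdpos]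
    nlinarith

lemma cdf_Y {σe σw P3 N0 t : ℝ} (hσe : 0 < σe) (hσw : 0 < σw)
    (hP3 : 0 < P3) (hN0 : 0 < N0) (ht : 0 < t) :
    (((expMean σe).prod (expMean σw)).map
        (fun p : ℝ×ℝ => p.2*P3/(p.1*P3 + N0))) (Iio t)
      = ENNReal.ofReal (1 - Real.exp (-(t*N0/(P3*σw))) * (1 + (t/σw)*σe)⁻¹) := by
  haveI := expMean_prob hσe
  haveI := expMean_prob hσw
  rw [Measure.map_apply measurable_psi measurableSet_Iio]
  refine prod_cdf hσe hσw (by positivity) (by positivity)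
    (measurable_psi measurableSet_Iio) (fun e he => ?_)
  have hm : σw * ((t/σw)*e + t*N0/(P3*σw)) = t*(e*P3+N0)/P3 := by field_simp
  rw [hm]
  ext w
  simp only [mem_inter_iff, mem_setOf_eq, mem_Ici, mem_Ico, mem_preimage, mem_Iio]
  have hdpos : 0 < e*P3 + N0 := by positivity
  constructor
  · rintro ⟨hlt, hw⟩
    refine ⟨hw, ?_⟩
    rw [div_lt_iff₀ hdpos] at hlt
    rw [lt_div_iff₀ hP3]
    nlinarith
  · rintro ⟨hw, hlt⟩
    refine ⟨?_, hw⟩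
    rw [lt_div_iff₀ hP3] at hlt
    rw [div_lt_iff₀ hdpos]
    nlinarith



lemma hasDeriv_FY {k r : ℝ} (hr : 0 < r) {y : ℝ} (hy : 1 + k*y ≠ 0) :
    HasDerivAt (fun y => -(1+k*y)⁻¹ * Real.exp (-y/r))
      (((1/r)*(1+k*y)⁻¹ + k*((1+k*y)^2)⁻¹) * Real.exp (-y/r)) y := by
  have h1 : HasDerivAt (fun y : ℝ => 1 + k*y) k y := by
    simpa using ((hasDerivAt_id y).const_mul k).const_add 1
  have h2 : HasDerivAt (fun y : ℝ => (1+k*y)⁻¹) (-k/(1+k*y)^2) y := by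
    exact h1.inv hy
  have h3i : HasDerivAt (fun y : ℝ => -y/r) (-1/r) y := by
    simpa using ((hasDerivAt_id y).neg).div_const r
  have h3 : HasDerivAt (fun y : ℝ => Real.exp (-y/r)) (Real.exp (-y/r) * (-1/r)) y :=
    (Real.hasDerivAt_exp _).comp y h3i
  have := (h2.neg).mul h3
  convert this using 1
  · rfl
  · rfl
  · funext z; simp only [Pi.mul_apply, Pi.neg_apply]
  · simp only [Pi.neg_apply]; ring

lemma contOn_FY' {k r : ℝ} (hr : 0 < r) {s : Set ℝ} (hs : ∀ y ∈ s, 1 + k*y ≠ 0) :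
    ContinuousOn (fun y => ((1/r)*(1+k*y)⁻¹ + k*((1+k*y)^2)⁻¹) * Real.exp (-y/r)) s := by
  have hbase : ContinuousOn (fun y : ℝ => 1 + k*y) s := by fun_prop
  refine ContinuousOn.mul (ContinuousOn.add ?_ ?_) ?_
  · exact continuousOn_const.mul (hbase.inv₀ hs)
  · refine continuousOn_const.mul (ContinuousOn.inv₀ (hbase.pow 2) ?_)
    intro y hy; exact pow_ne_zero _ (hs y hy)
  · fun_prop

lemma FY_integral {k r t : ℝ} (hr : 0 < r) (hk : 0 ≤ k) (ht : 0 ≤ t) :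
    ∫ y in (0:ℝ)..t, ((1/r)*(1+k*y)⁻¹ + k*((1+k*y)^2)⁻¹) * Real.exp (-y/r)
      = 1 - (1+k*t)⁻¹ * Real.exp (-t/r) := by
  have hne : ∀ y ∈ uIcc (0:ℝ) t, 1 + k*y ≠ 0 := by
    intro y hy
    rw [uIcc_of_le ht] at hy
    have := hy.1
    positivity
  rw [intervalIntegral.integral_eq_sub_of_hasDerivAt
    (f := fun y => -(1+k*y)⁻¹ * Real.exp (-y/r)) (fun y hy => hasDeriv_FY hr (hne y hy))
    ((contOn_FY' hr hne).intervalIntegrable)]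
  simp
  ring

lemma density_of_cdf {k r : ℝ} (hk : 0 ≤ k) (hr : 0 < r) (μ : Measure ℝ)
    [IsProbabilityMeasure μ]
    (hcdf : ∀ t, μ (Iio t)
      = ENNReal.ofReal (if 0 ≤ t then 1 - (1+k*t)⁻¹ * Real.exp (-t/r) else 0))
    (hpt : ∀ t, μ {t} = 0) :
    μ = volume.withDensity (fun y => ENNReal.ofReal
      (if 0 ≤ y then ((1/r)*(1+k*y)⁻¹ + k*((1+k*y)^2)⁻¹) * Real.exp (-y/r) else 0)) := by
  refine Measure.ext_of_Iic μ _ (fun t => ?_)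
  have hIic : μ (Iic t) = μ (Iio t) := by
    rw [← Set.Iio_union_right, measure_union (by simp) (measurableSet_singleton t),
      hpt, add_zero]
  rw [hIic, hcdf, withDensity_apply _ measurableSet_Iic]
  by_cases h : 0 ≤ t
  · rw [if_pos h, lintegral_Iic_eq_lintegral_Iio_add_Icc _ h]
    have hzero : ∫⁻ y in Iio (0:ℝ), ENNReal.ofReal
        (if 0 ≤ y then ((1/r)*(1+k*y)⁻¹ + k*((1+k*y)^2)⁻¹) * Real.exp (-y/r) else 0) = 0 := by
      rw [setLIntegral_congr_fun measurableSet_Iio (fun y (hy : y < 0) => by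
        rw [if_neg (not_le.2 hy), ENNReal.ofReal_zero])]
      simp
    rw [hzero, zero_add]
    have hne : ∀ y ∈ Icc (0:ℝ) t, 1 + k*y ≠ 0 := fun y hy => by have := hy.1; positivity
    have hcont := contOn_FY' (k := k) hr hne
    have hint : IntegrableOn (fun y => ((1/r)*(1+k*y)⁻¹ + k*((1+k*y)^2)⁻¹) * Real.exp (-y/r))
        (Icc 0 t) := hcont.integrableOn_compact isCompact_Icc
    rw [setLIntegral_congr_fun measurableSet_Icc (fun y hy => by
      rw [if_pos (hy.1 : (0:ℝ) ≤ y)])]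
    rw [← ofReal_integral_eq_lintegral_ofReal hint ?_]
    · congr 1
      rw [integral_Icc_eq_integral_Ioc, ← intervalIntegral.integral_of_le h]
      exact (FY_integral hr hk h).symm
    · refine ae_restrict_of_forall_mem measurableSet_Icc (fun y hy => ?_)
      have h1 : (0:ℝ) ≤ y := hy.1
      have h2 : (0:ℝ) < 1 + k*y := by positivity
      positivity
  · rw [if_neg h]
    rw [setLIntegral_congr_fun measurableSet_Iic (fun y (hy : y ≤ t) => by
      rw [if_neg (by push_neg at h ⊢; linarith), ENNReal.ofReal_zero])]
    simp

lemma iIndepFun_ae_congr {ι : Type*} {Ω : Type*} [MeasurableSpace Ω] {μ : Measure Ω}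
    {β : ι → Type*} {m : ∀ i, MeasurableSpace (β i)} {f g : ∀ i, Ω → β i}
    (h : iIndepFun f μ) (hfg : ∀ i, f i =ᵐ[μ] g i) : iIndepFun g μ := by
  rw [iIndepFun_iff_measure_inter_preimage_eq_mul] at h ⊢
  intro S sets hmeas
  have h1 : ∀ i, i ∈ S → ((g i ⁻¹' sets i : Set Ω) =ᵐ[μ] (f i ⁻¹' sets i)) := by
    intro i _
    exact eventuallyEq_set.2 ((hfg i).mono (fun ω hω => by
      simp only [Set.mem_preimage, hω]))
  have h2 : ((⋂ i ∈ S, g i ⁻¹' sets i) : Set Ω) =ᵐ[μ] (⋂ i ∈ S, f i ⁻¹' sets i) := by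
    rw [eventuallyEq_set]
    have := (ae_ball_iff S.countable_toSet).2 (fun i hi => eventuallyEq_set.1 (h1 i hi))
    filter_upwards [this] with ω hω
    simp only [Set.mem_iInter]
    exact ⟨fun hmem i hi => (hω i hi).1 (hmem i hi), fun hmem i hi => (hω i hi).2 (hmem i hi)⟩
  rw [measure_congr h2, h S hmeas]
  exact Finset.prod_congr rfl (fun i hi => measure_congr (h1 i hi).symm)

lemma expMean_singleton {a x : ℝ} : expMean a {x} = 0 :=
  (withDensity_absolutelyContinuous volume _) (Real.volume_singleton)



lemma measurable_gY {k r : ℝ} : Measurable (fun y : ℝ => ENNReal.ofReal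
    (if 0 ≤ y then ((1/r)*(1+k*y)⁻¹ + k*((1+k*y)^2)⁻¹) * Real.exp (-y/r) else 0)) := by
  refine ENNReal.measurable_ofReal.comp (Measurable.ite measurableSet_Ici ?_ measurable_const)
  have hb : Measurable (fun y : ℝ => 1 + k*y) := measurable_const.add (measurable_id.const_mul k)
  exact ((measurable_const.mul hb.inv).add
    (measurable_const.mul (hb.pow_const 2).inv)).mul
    ((measurable_id.neg.div_const r).exp)

set_option maxHeartbeats 1000000 in
/-- Lemma 1, eq. (13): outage probability of the far user UE2 in
Case 2 (MRC of the direct-link SINR `X` and the relay-link SINR `Y`).  With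
`W2 = |ĥ2|²`, `E2 = |e2|²`, `W3 = |ĥ3|²`, `E3 = |e3|²` mutually independent
exponentials, `λ_P = P2/P1 > γ̄2`, `ρ12 = P1·σ̂2²/N0`, `ρ3 = P3·σ̂3²/N0`,
`κ = σ_{e3}²/σ̂3²`:
`P{X + Y < γ̄2} = 1 − (1 + κ·γ̄2)⁻¹·exp(−γ̄2/ρ3) − ∫₀^{γ̄2} [...] dy`. -/
theorem stmt_6 {Ω : Type*} [MeasurableSpace Ω] (P : Measure Ω) [IsProbabilityMeasure P]
    (W2 E2 W3 E3 : Ω → ℝ) (σh2 σe2 σh3 σe3 P1 P2 P3 N0 γ2 : ℝ)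
    (hσh2 : 0 < σh2) (hσe2 : 0 < σe2) (hσh3 : 0 < σh3) (hσe3 : 0 < σe3)
    (hP1 : 0 < P1) (hP2 : 0 < P2) (hP3 : 0 < P3) (hN0 : 0 < N0) (hγ2 : 0 < γ2)
    (hlam : γ2 < P2 / P1)
    (hind : iIndepFun ![W2, E2, W3, E3] P)
    (hW2 : P.map W2 = expMean σh2) (hE2 : P.map E2 = expMean σe2)
    (hW3 : P.map W3 = expMean σh3) (hE3 : P.map E3 = expMean σe3)
    (lamP ρ12 ρ3 κ : ℝ)
    (hlamP : lamP = P2 / P1) (hρ12 : ρ12 = P1 * σh2 / N0)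
    (hρ3 : ρ3 = P3 * σh3 / N0) (hκ : κ = σe3 / σh3) :
    (P {ω | W2 ω * P2 / (W2 ω * P1 + E2 ω * (P1 + P2) + N0) +
            W3 ω * P3 / (E3 ω * P3 + N0) < γ2}).toReal =
      1 - (1 + κ * γ2)⁻¹ * Real.exp (-γ2 / ρ3) -
        ∫ y in (0:ℝ)..γ2,
          ((1 / ρ3) * (1 + κ * y)⁻¹ + κ * ((1 + κ * y) ^ 2)⁻¹) *
            (1 + (γ2 - y) * (1 + lamP) / (lamP - γ2 + y) * (σe2 / σh2))⁻¹ *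
            Real.exp (-((γ2 - y) / (lamP - γ2 + y)) * (1 / ρ12) - y / ρ3) := by
  subst hlamP hρ12 hρ3 hκ
  haveI h2p := expMean_prob hσh2
  haveI he2p := expMean_prob hσe2
  haveI h3p := expMean_prob hσh3
  haveI he3p := expMean_prob hσe3
  have hW2a : AEMeasurable W2 P := by
    by_contra hc
    rw [Measure.map_of_not_aemeasurable hc] at hW2
    exact (IsProbabilityMeasure.ne_zero (expMean σh2)) hW2.symm
  have hE2a : AEMeasurable E2 P := by
    by_contra hc
    rw [Measure.map_of_not_aemeasurable hc] at hE2
    exact (IsProbabilityMeasure.ne_zero (expMean σe2)) hE2.symm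
  have hW3a : AEMeasurable W3 P := by
    by_contra hc
    rw [Measure.map_of_not_aemeasurable hc] at hW3
    exact (IsProbabilityMeasure.ne_zero (expMean σh3)) hW3.symm
  have hE3a : AEMeasurable E3 P := by
    by_contra hc
    rw [Measure.map_of_not_aemeasurable hc] at hE3
    exact (IsProbabilityMeasure.ne_zero (expMean σe3)) hE3.symm
  obtain ⟨W2', hW2'm, hW2'ae⟩ : ∃ f, Measurable f ∧ W2 =ᵐ[P] f :=
    ⟨hW2a.mk W2, hW2a.measurable_mk, hW2a.ae_eq_mk⟩
  obtain ⟨E2', hE2'm, hE2'ae⟩ : ∃ f, Measurable f ∧ E2 =ᵐ[P] f :=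
    ⟨hE2a.mk E2, hE2a.measurable_mk, hE2a.ae_eq_mk⟩
  obtain ⟨W3', hW3'm, hW3'ae⟩ : ∃ f, Measurable f ∧ W3 =ᵐ[P] f :=
    ⟨hW3a.mk W3, hW3a.measurable_mk, hW3a.ae_eq_mk⟩
  obtain ⟨E3', hE3'm, hE3'ae⟩ : ∃ f, Measurable f ∧ E3 =ᵐ[P] f :=
    ⟨hE3a.mk E3, hE3a.measurable_mk, hE3a.ae_eq_mk⟩
  have hind' : iIndepFun ![W2', E2', W3', E3'] P := by
    refine iIndepFun_ae_congr hind (fun i => ?_)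
    fin_cases i
    · exact hW2'ae
    · exact hE2'ae
    · exact hW3'ae
    · exact hE3'ae
  have hgm : ∀ i : Fin 4, Measurable (![W2', E2', W3', E3'] i) := by
    intro i
    fin_cases i
    · exact hW2'm
    · exact hE2'm
    · exact hW3'm
    · exact hE3'm
  have hmW2 : P.map W2' = expMean σh2 := by rw [← Measure.map_congr hW2'ae]; exact hW2
  have hmE2 : P.map E2' = expMean σe2 := by rw [← Measure.map_congr hE2'ae]; exact hE2
  have hmW3 : P.map W3' = expMean σh3 := by rw [← Measure.map_congr hW3'ae]; exact hW3
  have hmE3 : P.map E3' = expMean σe3 := by rw [← Measure.map_congr hE3'ae]; exact hE3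
  have hEW2 : IndepFun E2' W2' P := hind'.indepFun (show (1 : Fin 4) ≠ 0 by decide)
  have hEW3 : IndepFun E3' W3' P := hind'.indepFun (show (3 : Fin 4) ≠ 2 by decide)
  have hlaw2 : P.map (fun ω => (E2' ω, W2' ω)) = (expMean σe2).prod (expMean σh2) := by
    rw [(indepFun_iff_map_prod_eq_prod_map_map hE2'm.aemeasurable hW2'm.aemeasurable).1 hEW2,
      hmE2, hmW2]
  have hlaw3 : P.map (fun ω => (E3' ω, W3' ω)) = (expMean σe3).prod (expMean σh3) := by
    rw [(indepFun_iff_map_prod_eq_prod_map_map hE3'm.aemeasurable hW3'm.aemeasurable).1 hEW3,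
      hmE3, hmW3]
  have hpair : IndepFun (fun ω => (E2' ω, W2' ω)) (fun ω => (E3' ω, W3' ω)) P :=
    hind'.indepFun_prodMk_prodMk hgm 1 0 3 2 (by decide) (by decide) (by decide) (by decide)
  have hXY : IndepFun
      ((fun p : ℝ × ℝ => p.2*P2/(p.2*P1 + p.1*(P1+P2) + N0)) ∘ (fun ω => (E2' ω, W2' ω)))
      ((fun p : ℝ × ℝ => p.2*P3/(p.1*P3 + N0)) ∘ (fun ω => (E3' ω, W3' ω))) P :=
    hpair.comp measurable_phi measurable_psi
  have hXm : Measurable ((fun p : ℝ × ℝ => p.2*P2/(p.2*P1 + p.1*(P1+P2) + N0)) ∘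
      (fun ω => (E2' ω, W2' ω))) := measurable_phi.comp (hE2'm.prodMk hW2'm)
  have hYm : Measurable ((fun p : ℝ × ℝ => p.2*P3/(p.1*P3 + N0)) ∘
      (fun ω => (E3' ω, W3' ω))) := measurable_psi.comp (hE3'm.prodMk hW3'm)
  have hμX : P.map ((fun p : ℝ × ℝ => p.2*P2/(p.2*P1 + p.1*(P1+P2) + N0)) ∘
      (fun ω => (E2' ω, W2' ω)))
      = ((expMean σe2).prod (expMean σh2)).map
        (fun p : ℝ × ℝ => p.2*P2/(p.2*P1 + p.1*(P1+P2) + N0)) := by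
    rw [← hlaw2, Measure.map_map measurable_phi (hE2'm.prodMk hW2'm)]
  have hμY : P.map ((fun p : ℝ × ℝ => p.2*P3/(p.1*P3 + N0)) ∘ (fun ω => (E3' ω, W3' ω)))
      = ((expMean σe3).prod (expMean σh3)).map (fun p : ℝ × ℝ => p.2*P3/(p.1*P3 + N0)) := by
    rw [← hlaw3, Measure.map_map measurable_psi (hE3'm.prodMk hW3'm)]
  have hsetm : MeasurableSet {p : ℝ × ℝ | p.1 + p.2 < γ2} :=
    measurableSet_lt (measurable_fst.add measurable_snd) measurable_const
  have hev : {ω | W2 ω * P2 / (W2 ω * P1 + E2 ω * (P1 + P2) + N0) +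
      W3 ω * P3 / (E3 ω * P3 + N0) < γ2} =ᵐ[P]
      {ω | W2' ω * P2 / (W2' ω * P1 + E2' ω * (P1 + P2) + N0) +
        W3' ω * P3 / (E3' ω * P3 + N0) < γ2} := by
    rw [eventuallyEq_set]
    filter_upwards [hW2'ae, hE2'ae, hW3'ae, hE3'ae] with ω h1 h2 h3 h4
    simp only [mem_setOf_eq, h1, h2, h3, h4]
  rw [measure_congr hev]
  have hmapped : P {ω | W2' ω * P2 / (W2' ω * P1 + E2' ω * (P1 + P2) + N0) +
      W3' ω * P3 / (E3' ω * P3 + N0) < γ2}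
      = ((((expMean σe2).prod (expMean σh2)).map
          (fun p : ℝ × ℝ => p.2*P2/(p.2*P1 + p.1*(P1+P2) + N0))).prod
        (((expMean σe3).prod (expMean σh3)).map
          (fun p : ℝ × ℝ => p.2*P3/(p.1*P3 + N0)))) {p : ℝ × ℝ | p.1 + p.2 < γ2} := by
    rw [← hμX, ← hμY,
      ← (indepFun_iff_map_prod_eq_prod_map_map hXm.aemeasurable hYm.aemeasurable).1 hXY,
      Measure.map_apply (hXm.prodMk hYm) hsetm]
    rfl
  rw [hmapped]
  set μX : Measure ℝ := ((expMean σe2).prod (expMean σh2)).map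
    (fun p : ℝ × ℝ => p.2*P2/(p.2*P1 + p.1*(P1+P2) + N0)) with hμXdef
  set μY : Measure ℝ := ((expMean σe3).prod (expMean σh3)).map
    (fun p : ℝ × ℝ => p.2*P3/(p.1*P3 + N0)) with hμYdef
  haveI : IsProbabilityMeasure μX := Measure.isProbabilityMeasure_map measurable_phi.aemeasurable
  haveI : IsProbabilityMeasure μY := Measure.isProbabilityMeasure_map measurable_psi.aemeasurable
  have hγlam : γ2 * P1 < P2 := (lt_div_iff₀ hP1).1 hlam
  have hGmono : Monotone (fun t => μX (Iio t)) := fun s t hst => measure_mono (Iio_subset_Iio hst)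
  have hG0 : ∀ t : ℝ, t ≤ 0 → μX (Iio t) = 0 := fun t ht =>
    cdf_zero hσe2 hσh2 measurable_phi
      (fun p h1 h2 => div_nonneg (by positivity) (by positivity)) ht
  have hdpos : ∀ y ∈ Icc (0:ℝ) γ2, 0 < P2 - (γ2 - y)*P1 := by
    intro y hy
    nlinarith [mul_nonneg hy.1 hP1.le]
  have hGX : ∀ y : ℝ, 0 < y → y < γ2 → μX (Iio (γ2 - y)) = ENNReal.ofReal
      (1 - Real.exp (-((γ2-y)*N0/((P2 - (γ2-y)*P1)*σh2)))
        * (1 + ((γ2-y)*(P1+P2)/((P2-(γ2-y)*P1)*σh2))*σe2)⁻¹) := by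
    intro y hy1 hy2
    exact cdf_X hσe2 hσh2 hP1 hP2 hN0 (by linarith) (by nlinarith [mul_pos hy1 hP1])
  have hcdfY : ∀ t : ℝ, μY (Iio t) = ENNReal.ofReal
      (if 0 ≤ t then 1 - (1+(σe3/σh3)*t)⁻¹ * Real.exp (-t/(P3*σh3/N0)) else 0) := by
    intro t
    by_cases ht : 0 < t
    · rw [hμYdef, cdf_Y hσe3 hσh3 hP3 hN0 ht, if_pos ht.le,
        show -(t*N0/(P3*σh3)) = -t/(P3*σh3/N0) by field_simp,
        show (t/σh3)*σe3 = (σe3/σh3)*t by ring, mul_comm]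
    · push_neg at ht
      rw [hμYdef, cdf_zero hσe3 hσh3 measurable_psi
        (fun p h1 h2 => div_nonneg (by positivity) (by positivity)) ht]
      by_cases h0 : 0 ≤ t
      · rw [if_pos h0, le_antisymm ht h0]
        norm_num
      · rw [if_neg h0, ENNReal.ofReal_zero]
  have hptY : ∀ t : ℝ, μY {t} = 0 := by
    intro t
    rw [hμYdef, Measure.map_apply measurable_psi (measurableSet_singleton t),
      Measure.prod_apply (measurable_psi (measurableSet_singleton t))]
    have hz : (fun e => expMean σh3
        (Prod.mk e ⁻¹' ((fun p : ℝ × ℝ => p.2*P3/(p.1*P3 + N0)) ⁻¹' {t})))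
        =ᵐ[expMean σe3] 0 := by
      filter_upwards [expMean_nonneg_ae (a := σe3)] with e he
      have hd : (0:ℝ) < e*P3 + N0 := by positivity
      refine measure_mono_null (fun w hw => ?_)
        (expMean_singleton (a := σh3) (x := t*(e*P3+N0)/P3))
      have hwt : w*P3/(e*P3+N0) = t := hw
      have h5 : w*P3 = t*(e*P3+N0) := (div_eq_iff hd.ne').1 hwt
      show w ∈ ({t*(e*P3+N0)/P3} : Set ℝ)
      rw [mem_singleton_iff, eq_div_iff hP3.ne']
      exact h5
    rw [lintegral_congr_ae hz]
    simp
  have hdensY : μY = volume.withDensity (fun y => ENNReal.ofReal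
      (if 0 ≤ y then ((1/(P3*σh3/N0))*(1+(σe3/σh3)*y)⁻¹
        + (σe3/σh3)*((1+(σe3/σh3)*y)^2)⁻¹) * Real.exp (-y/(P3*σh3/N0)) else 0)) :=
    density_of_cdf (by positivity) (by positivity) μY hcdfY hptY
  have hGm : Measurable fun y : ℝ => μX (Iio (γ2 - y)) :=
    hGmono.measurable.comp (measurable_const.sub measurable_id)
  rw [Measure.prod_apply_symm hsetm]
  have hsec : ∀ y : ℝ, ((fun x => (x, y)) ⁻¹' {p : ℝ × ℝ | p.1 + p.2 < γ2}) = Iio (γ2 - y) := by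
    intro y; ext x
    simp only [mem_preimage, mem_setOf_eq, mem_Iio]
    exact lt_sub_iff_add_lt.symm
  simp_rw [hsec]
  rw [hdensY, lintegral_withDensity_eq_lintegral_mul _ measurable_gY hGm]
  simp only [Pi.mul_apply]
  have haeind : (fun y : ℝ => ENNReal.ofReal
      (if 0 ≤ y then ((1/(P3*σh3/N0))*(1+(σe3/σh3)*y)⁻¹
        + (σe3/σh3)*((1+(σe3/σh3)*y)^2)⁻¹) * Real.exp (-y/(P3*σh3/N0)) else 0)
        * μX (Iio (γ2 - y)))
      =ᵐ[volume] (Ioo (0:ℝ) γ2).indicator (fun y => ENNReal.ofReal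
      (if 0 ≤ y then ((1/(P3*σh3/N0))*(1+(σe3/σh3)*y)⁻¹
        + (σe3/σh3)*((1+(σe3/σh3)*y)^2)⁻¹) * Real.exp (-y/(P3*σh3/N0)) else 0)
        * μX (Iio (γ2 - y))) := by
    have hne0 : ∀ᵐ (y : ℝ) ∂volume, y ≠ 0 := by
      rw [ae_iff]
      have h00 : {y : ℝ | ¬ y ≠ 0} = {0} := by ext y; simp
      rw [h00]
      exact Real.volume_singleton
    filter_upwards [hne0] with y hy
    by_cases hmem : y ∈ Ioo (0:ℝ) γ2
    · rw [indicator_of_mem hmem]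
    · rw [indicator_of_notMem hmem]
      rcases le_or_gt y 0 with h | h
      · have hyneg : y < 0 := lt_of_le_of_ne h hy
        rw [if_neg (not_le.2 hyneg), ENNReal.ofReal_zero, zero_mul]
      · have hge : γ2 ≤ y := by
          by_contra hcon; push_neg at hcon; exact hmem ⟨h, hcon⟩
        rw [hG0 (γ2 - y) (by linarith), mul_zero]
  rw [lintegral_congr_ae haeind, lintegral_indicator measurableSet_Ioo]
  have hval : ∀ y ∈ Ioo (0:ℝ) γ2, ENNReal.ofReal
      (if 0 ≤ y then ((1/(P3*σh3/N0))*(1+(σe3/σh3)*y)⁻¹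
        + (σe3/σh3)*((1+(σe3/σh3)*y)^2)⁻¹) * Real.exp (-y/(P3*σh3/N0)) else 0)
        * μX (Iio (γ2 - y))
      = ENNReal.ofReal ((((1/(P3*σh3/N0))*(1+(σe3/σh3)*y)⁻¹
        + (σe3/σh3)*((1+(σe3/σh3)*y)^2)⁻¹) * Real.exp (-y/(P3*σh3/N0)))
        * (1 - Real.exp (-((γ2-y)*N0/((P2 - (γ2-y)*P1)*σh2)))
          * (1 + ((γ2-y)*(P1+P2)/((P2-(γ2-y)*P1)*σh2))*σe2)⁻¹)) := by
    intro y hy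
    have hκy : (0:ℝ) < 1 + (σe3/σh3)*y := by
      have : (0:ℝ) ≤ (σe3/σh3)*y := mul_nonneg (by positivity) hy.1.le
      linarith
    rw [if_pos hy.1.le, hGX y hy.1 hy.2, ← ENNReal.ofReal_mul (by positivity)]
  rw [setLIntegral_congr_fun measurableSet_Ioo hval]
  have hcfY : ContinuousOn (fun y : ℝ => ((1/(P3*σh3/N0))*(1+(σe3/σh3)*y)⁻¹
      + (σe3/σh3)*((1+(σe3/σh3)*y)^2)⁻¹) * Real.exp (-y/(P3*σh3/N0))) (Icc 0 γ2) := by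
    refine contOn_FY' (by positivity) (fun y hy => ?_)
    have : (0:ℝ) ≤ (σe3/σh3)*y := mul_nonneg (by positivity) hy.1
    linarith
  have hdne : ∀ y ∈ Icc (0:ℝ) γ2, ((P2 - (γ2 - y)*P1)*σh2) ≠ 0 := fun y hy =>
    (mul_pos (hdpos y hy) hσh2).ne'
  have hcH : ContinuousOn (fun y : ℝ =>
      1 - Real.exp (-((γ2-y)*N0/((P2 - (γ2-y)*P1)*σh2)))
        * (1 + ((γ2-y)*(P1+P2)/((P2-(γ2-y)*P1)*σh2))*σe2)⁻¹) (Icc 0 γ2) := by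
    refine continuousOn_const.sub (ContinuousOn.mul ?_ ?_)
    · exact Real.continuous_exp.comp_continuousOn
        ((ContinuousOn.div (by fun_prop) (by fun_prop) hdne).neg)
    · refine ContinuousOn.inv₀ (continuousOn_const.add
        ((ContinuousOn.div (by fun_prop) (by fun_prop) hdne).mul continuousOn_const))
        (fun y hy => ?_)
      have h1 : 0 < P2 - (γ2 - y)*P1 := hdpos y hy
      have h2 : 0 ≤ γ2 - y := by linarith [hy.2]
      have h3 : (0:ℝ) ≤ (γ2-y)*(P1+P2)/((P2-(γ2-y)*P1)*σh2)*σe2 :=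
        mul_nonneg (div_nonneg (mul_nonneg h2 (by positivity)) (by positivity)) hσe2.le
      linarith
  have hnnIoo : ∀ y ∈ Ioo (0:ℝ) γ2, 0 ≤ (((1/(P3*σh3/N0))*(1+(σe3/σh3)*y)⁻¹
      + (σe3/σh3)*((1+(σe3/σh3)*y)^2)⁻¹) * Real.exp (-y/(P3*σh3/N0)))
      * (1 - Real.exp (-((γ2-y)*N0/((P2 - (γ2-y)*P1)*σh2)))
        * (1 + ((γ2-y)*(P1+P2)/((P2-(γ2-y)*P1)*σh2))*σe2)⁻¹) := by
    intro y hy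
    have hκy : (0:ℝ) < 1 + (σe3/σh3)*y := by
      have : (0:ℝ) ≤ (σe3/σh3)*y := mul_nonneg (by positivity) hy.1.le
      linarith
    have hd1 : 0 < P2 - (γ2 - y)*P1 := hdpos y (Ioo_subset_Icc_self hy)
    have hsub : (0:ℝ) ≤ γ2 - y := by linarith [hy.2]
    have hα : (0:ℝ) ≤ (γ2-y)*(P1+P2)/((P2-(γ2-y)*P1)*σh2)*σe2 :=
      mul_nonneg (div_nonneg (mul_nonneg hsub (by positivity)) (by positivity)) hσe2.le
    have hβ : (0:ℝ) ≤ (γ2-y)*N0/((P2-(γ2-y)*P1)*σh2) :=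
      div_nonneg (mul_nonneg hsub hN0.le) (by positivity)
    have hexp1 : Real.exp (-((γ2-y)*N0/((P2-(γ2-y)*P1)*σh2))) ≤ 1 := by
      rw [Real.exp_le_one_iff]; linarith
    have hinv1 : (1 + (γ2-y)*(P1+P2)/((P2-(γ2-y)*P1)*σh2)*σe2)⁻¹ ≤ 1 :=
      inv_le_one_of_one_le₀ (by linarith)
    have hH : Real.exp (-((γ2-y)*N0/((P2-(γ2-y)*P1)*σh2)))
        * (1 + ((γ2-y)*(P1+P2)/((P2-(γ2-y)*P1)*σh2))*σe2)⁻¹ ≤ 1 := by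
      have := mul_le_mul hexp1 hinv1 (by positivity) zero_le_one
      simpa using this
    have h9 : (0:ℝ) ≤ 1 - Real.exp (-((γ2-y)*N0/((P2-(γ2-y)*P1)*σh2)))
        * (1 + ((γ2-y)*(P1+P2)/((P2-(γ2-y)*P1)*σh2))*σe2)⁻¹ := by linarith
    have h10 : (0:ℝ) ≤ ((1/(P3*σh3/N0))*(1+(σe3/σh3)*y)⁻¹
      + (σe3/σh3)*((1+(σe3/σh3)*y)^2)⁻¹) * Real.exp (-y/(P3*σh3/N0)) := by positivity
    exact mul_nonneg h10 h9
  have hIntOn : IntegrableOn (fun y : ℝ => (((1/(P3*σh3/N0))*(1+(σe3/σh3)*y)⁻¹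
      + (σe3/σh3)*((1+(σe3/σh3)*y)^2)⁻¹) * Real.exp (-y/(P3*σh3/N0)))
      * (1 - Real.exp (-((γ2-y)*N0/((P2 - (γ2-y)*P1)*σh2)))
        * (1 + ((γ2-y)*(P1+P2)/((P2-(γ2-y)*P1)*σh2))*σe2)⁻¹)) (Ioo 0 γ2) volume :=
    ((hcfY.mul hcH).integrableOn_compact isCompact_Icc).mono_set Ioo_subset_Icc_self
  rw [← ofReal_integral_eq_lintegral_ofReal hIntOn
    (ae_restrict_of_forall_mem measurableSet_Ioo hnnIoo),
    ENNReal.toReal_ofReal (setIntegral_nonneg measurableSet_Ioo hnnIoo)]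
  rw [← integral_Ioc_eq_integral_Ioo, ← intervalIntegral.integral_of_le hγ2.le]
  have hIcc : uIcc (0:ℝ) γ2 = Icc 0 γ2 := uIcc_of_le hγ2.le
  have hint1 : IntervalIntegrable (fun y : ℝ => ((1/(P3*σh3/N0))*(1+(σe3/σh3)*y)⁻¹
      + (σe3/σh3)*((1+(σe3/σh3)*y)^2)⁻¹) * Real.exp (-y/(P3*σh3/N0))) volume 0 γ2 := by
    apply ContinuousOn.intervalIntegrable
    rw [hIcc]; exact hcfY
  have hint2 : IntervalIntegrable (fun y : ℝ => (((1/(P3*σh3/N0))*(1+(σe3/σh3)*y)⁻¹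
      + (σe3/σh3)*((1+(σe3/σh3)*y)^2)⁻¹) * Real.exp (-y/(P3*σh3/N0)))
      * (Real.exp (-((γ2-y)*N0/((P2 - (γ2-y)*P1)*σh2)))
        * (1 + ((γ2-y)*(P1+P2)/((P2-(γ2-y)*P1)*σh2))*σe2)⁻¹)) volume 0 γ2 := by
    apply ContinuousOn.intervalIntegrable
    rw [hIcc]
    refine hcfY.mul (ContinuousOn.mul ?_ ?_)
    · exact Real.continuous_exp.comp_continuousOn
        ((ContinuousOn.div (by fun_prop) (by fun_prop) hdne).neg)
    · refine ContinuousOn.inv₀ (continuousOn_const.add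
        ((ContinuousOn.div (by fun_prop) (by fun_prop) hdne).mul continuousOn_const))
        (fun y hy => ?_)
      have h1 : 0 < P2 - (γ2 - y)*P1 := hdpos y hy
      have h2 : 0 ≤ γ2 - y := by linarith [hy.2]
      have h3 : (0:ℝ) ≤ (γ2-y)*(P1+P2)/((P2-(γ2-y)*P1)*σh2)*σe2 :=
        mul_nonneg (div_nonneg (mul_nonneg h2 (by positivity)) (by positivity)) hσe2.le
      linarith
  have hsplit : (∫ y in (0:ℝ)..γ2, (((1/(P3*σh3/N0))*(1+(σe3/σh3)*y)⁻¹
      + (σe3/σh3)*((1+(σe3/σh3)*y)^2)⁻¹) * Real.exp (-y/(P3*σh3/N0)))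
      * (1 - Real.exp (-((γ2-y)*N0/((P2 - (γ2-y)*P1)*σh2)))
        * (1 + ((γ2-y)*(P1+P2)/((P2-(γ2-y)*P1)*σh2))*σe2)⁻¹))
      = (∫ y in (0:ℝ)..γ2, ((1/(P3*σh3/N0))*(1+(σe3/σh3)*y)⁻¹
        + (σe3/σh3)*((1+(σe3/σh3)*y)^2)⁻¹) * Real.exp (-y/(P3*σh3/N0)))
      - ∫ y in (0:ℝ)..γ2, (((1/(P3*σh3/N0))*(1+(σe3/σh3)*y)⁻¹
        + (σe3/σh3)*((1+(σe3/σh3)*y)^2)⁻¹) * Real.exp (-y/(P3*σh3/N0)))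
      * (Real.exp (-((γ2-y)*N0/((P2 - (γ2-y)*P1)*σh2)))
        * (1 + ((γ2-y)*(P1+P2)/((P2-(γ2-y)*P1)*σh2))*σe2)⁻¹) := by
    rw [← intervalIntegral.integral_sub hint1 hint2]
    refine intervalIntegral.integral_congr (fun y hy => ?_)
    ring
  rw [hsplit, FY_integral (by positivity) (by positivity) hγ2.le]
  congr 1
  refine (intervalIntegral.integral_congr (fun y hy => ?_)).symm
  rw [hIcc] at hy
  have hy1 : (0:ℝ) ≤ y := hy.1
  have hy2 : y ≤ γ2 := hy.2
  have hd1 : (0:ℝ) < P2/P1 - γ2 + y := by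
    have := hlam
    linarith
  have hd2 : (0:ℝ) < P2 - (γ2 - y)*P1 := hdpos y hy
  have hA : -((γ2 - y) / (P2/P1 - γ2 + y)) * (1 / (P1*σh2/N0)) - y/(P3*σh3/N0)
      = -((γ2-y)*N0/((P2 - (γ2-y)*P1)*σh2)) + -(y/(P3*σh3/N0)) := by
    rw [sub_eq_add_neg]
    congr 1
    rw [neg_mul, neg_inj, one_div_div, div_mul_div_comm,
      div_eq_div_iff (mul_pos hd1 (by positivity : (0:ℝ) < P1*σh2)).ne' (mul_pos hd2 hσh2).ne']
    field_simp
    ring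
  have hB : (1 + (γ2 - y) * (1 + P2/P1) / (P2/P1 - γ2 + y) * (σe2 / σh2))
      = (1 + ((γ2-y)*(P1+P2)/((P2-(γ2-y)*P1)*σh2))*σe2) := by
    congr 1
    rw [div_mul_div_comm, div_mul_eq_mul_div,
      div_eq_div_iff (mul_pos hd1 hσh2).ne' (mul_pos hd2 hσh2).ne']
    have hq : P2/P1*P1 = P2 := div_mul_cancel₀ _ hP1.ne'
    linear_combination (-(γ2-y)*σe2*σh2*(1+(γ2-y))) * hq
  rw [hA, Real.exp_add, hB]
  ring
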